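/- Let G be a simple graph in which every vertex has at most k neighbors, and let v be a vertex of G. If the graph obtained from G by deleting v (and all edges incident to v) has a proper edge coloring using k + 1 colors, then G has a proper edge coloring using k + 1 colors. -/

import Mathlib

/-- A proper edge coloring of a simple graph: distinct edges sharing an endpoint
get different colors. -/
def IsProperEdgeColoring {V α : Type*} (G : SimpleGraph V) (c : G.edgeSet → α) : Prop :=
  ∀ e₁ e₂ : G.edgeSet, e₁ ≠ e₂ →
    (∃ v, v ∈ (e₁ : Sym2 V) ∧ v ∈ (e₂ : Sym2 V)) → c e₁ ≠ c e₂

section Vizing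

attribute [local instance] Classical.propDecidable

variable {V : Type*} {k : ℕ}

/-- partial proper edge coloring as a symmetric function -/
def PCol (G : SimpleGraph V) (f : V → V → Option (Fin (k+1))) : Prop :=
  (∀ u w, f u w = f w u) ∧ (∀ u w, (f u w).isSome → G.Adj u w) ∧
  (∀ u w w' (a : Fin (k+1)), f u w = some a → f u w' = some a → w = w')

def fre (f : V → V → Option (Fin (k+1))) (u : V) (a : Fin (k+1)) : Prop :=
  ∀ w, f u w ≠ some a

lemma PCol.loopless {G : SimpleGraph V} {f : V → V → Option (Fin (k+1))}
    (hf : PCol G f) (u : V) : f u u = none := by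
  cases h : f u u with
  | none => rfl
  | some a => exact absurd (hf.2.1 u u (by simp [h])) (G.irrefl)

lemma exists_fre [Fintype V] {G : SimpleGraph V} [DecidableRel G.Adj]
    (hdeg : ∀ u, G.degree u ≤ k) {f : V → V → Option (Fin (k+1))}
    (hf : PCol G f) (u : V) : ∃ a, fre f u a := by
  by_contra h
  push_neg at h
  simp only [fre, not_forall, not_not] at h
  choose w hw using h
  have hinj : Function.Injective w := by
    intro a b hab
    have h1 := hw a
    have h2 := hw b
    rw [← hab] at h2
    rw [h1] at h2
    exact Option.some_injective _ h2
  have hmem : ∀ a, w a ∈ G.neighborFinset u := by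
    intro a
    rw [SimpleGraph.mem_neighborFinset]
    exact hf.2.1 u (w a) (by simp [hw a])
  have hle := Finset.card_le_card_of_injOn (s := Finset.univ) (t := G.neighborFinset u)
    w (fun a _ => hmem a) (fun a _ b _ h => hinj h)
  simp only [Finset.card_univ, Fintype.card_fin] at hle
  have h2 := hdeg u
  rw [← SimpleGraph.card_neighborFinset_eq_degree] at h2
  omega

section Swap

variable {α β : Fin (k+1)} {f : V → V → Option (Fin (k+1))} {b : V}

/-- transposition of two colors -/
def tauc (α β : Fin (k+1)) (a : Fin (k+1)) : Fin (k+1) :=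
  if a = α then β else if a = β then α else a

lemma tauc_invol (α β a : Fin (k+1)) : tauc α β (tauc α β a) = a := by
  unfold tauc
  split_ifs <;> simp_all

lemma map_tauc_eq_some {o : Option (Fin (k+1))} {a : Fin (k+1)} :
    Option.map (tauc α β) o = some a ↔ o = some (tauc α β a) := by
  cases o with
  | none => simp
  | some c =>
    simp only [Option.map_some, Option.some.injEq]
    constructor
    · rintro rfl; exact (tauc_invol α β c).symm
    · rintro rfl; exact tauc_invol α β a

/-- the chain relation: edges colored α or β -/
def Rch (α β : Fin (k+1)) (f : V → V → Option (Fin (k+1))) (u w : V) : Prop :=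
  f u w = some α ∨ f u w = some β

lemma Rch_symm (hsymm : ∀ u w, f u w = f w u) :
    Symmetric (Rch α β f) := by
  intro u w h
  unfold Rch at *
  rw [hsymm w u]
  exact h

/-- swap colors α, β on the connected component of b -/
noncomputable def swapc (α β : Fin (k+1)) (f : V → V → Option (Fin (k+1))) (b : V) :
    V → V → Option (Fin (k+1)) :=
  fun u w => if Relation.ReflTransGen (Rch α β f) b u ∧ Relation.ReflTransGen (Rch α β f) b w
    then Option.map (tauc α β) (f u w) else f u w

lemma map_tauc_of_not_Rch {u w : V} (h : ¬ Rch α β f u w) :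
    Option.map (tauc α β) (f u w) = f u w := by
  unfold Rch at h
  push_neg at h
  cases ho : f u w with
  | none => simp
  | some c =>
    rw [ho] at h
    simp only [Option.map_some, Option.some.injEq]
    unfold tauc
    have h1 : c ≠ α := fun hc => h.1 (by rw [hc])
    have h2 : c ≠ β := fun hc => h.2 (by rw [hc])
    simp [h1, h2]

lemma swapc_eq (u w : V) :
    swapc α β f b u w = if Relation.ReflTransGen (Rch α β f) b u
      then Option.map (tauc α β) (f u w) else f u w := by
  unfold swapc
  by_cases h1 : Relation.ReflTransGen (Rch α β f) b u
  · by_cases h2 : Relation.ReflTransGen (Rch α β f) b w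
    · rw [if_pos ⟨h1, h2⟩, if_pos h1]
    · rw [if_neg (fun h => h2 h.2), if_pos h1,
        map_tauc_of_not_Rch (fun hr => h2 (h1.tail hr))]
  · rw [if_neg (fun h => h1 h.1), if_neg h1]

lemma swapc_symm (hsymm : ∀ u w, f u w = f w u) (u w : V) :
    swapc α β f b u w = swapc α β f b w u := by
  unfold swapc
  rw [hsymm u w]
  exact if_congr and_comm rfl rfl

lemma swapc_isSome (u w : V) :
    (swapc α β f b u w).isSome = (f u w).isSome := by
  unfold swapc
  split_ifs <;> simp

lemma swapc_pcol {G : SimpleGraph V} (hf : PCol G f) :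
    PCol G (swapc α β f b) := by
  refine ⟨fun u w => swapc_symm hf.1 u w, fun u w h => hf.2.1 u w ?_, ?_⟩
  · rwa [swapc_isSome] at h
  · intro u w w' a h1 h2
    rw [swapc_eq] at h1 h2
    by_cases hr : Relation.ReflTransGen (Rch α β f) b u
    · rw [if_pos hr, map_tauc_eq_some] at h1 h2
      exact hf.2.2 u w w' _ h1 h2
    · rw [if_neg hr] at h1 h2
      exact hf.2.2 u w w' _ h1 h2

lemma fre_swapc_of_not (h : ¬ Relation.ReflTransGen (Rch α β f) b u) (a : Fin (k+1)) :
    fre (swapc α β f b) u a ↔ fre f u a := by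
  have he : ∀ w, swapc α β f b u w = f u w := fun w => by rw [swapc_eq, if_neg h]
  unfold fre
  simp_rw [he]

lemma fre_swapc_of (h : Relation.ReflTransGen (Rch α β f) b u) (a : Fin (k+1)) :
    fre (swapc α β f b) u a ↔ fre f u (tauc α β a) := by
  unfold fre
  constructor <;> intro hh w <;> have h2 := hh w
  · intro hc
    rw [swapc_eq, if_pos h] at h2
    exact h2 (by rw [map_tauc_eq_some, hc])
  · rw [swapc_eq, if_pos h]
    intro hc
    exact h2 (map_tauc_eq_some.1 hc)

lemma fre_swapc_other (ha : a ≠ α) (hb : a ≠ β) (u : V) :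
    fre (swapc α β f b) u a ↔ fre f u a := by
  by_cases h : Relation.ReflTransGen (Rch α β f) b u
  · rw [fre_swapc_of h]
    have : tauc α β a = a := by unfold tauc; simp [ha, hb]
    rw [this]
  · exact fre_swapc_of_not h a

end Swap


section Chain

variable {G : SimpleGraph V} {α β : Fin (k+1)} {f : V → V → Option (Fin (k+1))}

/-- the α-partner of a vertex -/
noncomputable def pf (f : V → V → Option (Fin (k+1))) (γ : Fin (k+1)) (u : V) : Option V :=
  if h : ∃ w, f u w = some γ then some h.choose else none

lemma pf_spec {γ : Fin (k+1)} {u w : V} (h : pf f γ u = some w) : f u w = some γ := by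
  unfold pf at h
  by_cases h1 : ∃ w, f u w = some γ
  · rw [dif_pos h1] at h
    obtain rfl : h1.choose = w := by simpa using h
    exact h1.choose_spec
  · rw [dif_neg h1] at h
    simp at h

lemma pf_eq (hf : PCol G f) {γ : Fin (k+1)} {u w : V} (h : f u w = some γ) :
    pf f γ u = some w := by
  unfold pf
  have h1 : ∃ w, f u w = some γ := ⟨w, h⟩
  rw [dif_pos h1]
  exact congrArg _ (hf.2.2 u _ w γ h1.choose_spec h)

/-- color of the n-th chain step -/
def stc (α β : Fin (k+1)) (n : ℕ) : Fin (k+1) := if Even n then β else α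

/-- the α/β chain starting at x (which misses α) -/
noncomputable def chn (f : V → V → Option (Fin (k+1))) (α β : Fin (k+1)) (x : V) : ℕ → Option V
  | 0 => some x
  | n+1 => (chn f α β x n).bind (pf f (stc α β n))

lemma stc_mem (α β : Fin (k+1)) (n : ℕ) : stc α β n = α ∨ stc α β n = β := by
  unfold stc; split_ifs <;> simp

lemma stc_succ_ne (hab : α ≠ β) (n : ℕ) : stc α β (n+1) ≠ stc α β n := by
  unfold stc
  rcases Nat.even_or_odd n with he | ho
  · simp [he, Nat.even_add_one, hab]
  · simp [Nat.not_even_iff_odd.2 ho, Nat.even_add_one, hab.symm]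

lemma stc_two_ne (hab : α ≠ β) {γ δ : Fin (k+1)} (hγ : γ = α ∨ γ = β) (hδ : δ = α ∨ δ = β)
    (hγδ : γ ≠ δ) {n : ℕ} (hn : δ = stc α β n) : γ = stc α β (n+1) := by
  have h1 := stc_succ_ne hab n
  rcases hγ with h3 | h3 <;> rcases hδ with h4 | h4
  · exact absurd (h3.trans h4.symm) hγδ
  · rcases stc_mem α β (n+1) with h2 | h2
    · rw [h2, h3]
    · exact absurd (h2.trans (h4.symm.trans hn)) h1
  · rcases stc_mem α β (n+1) with h2 | h2
    · exact absurd (h2.trans (h4.symm.trans hn)) h1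
    · rw [h2, h3]
  · exact absurd (h3.trans h4.symm) hγδ

lemma chn_succ (f : V → V → Option (Fin (k+1))) (α β : Fin (k+1)) (x : V) (n : ℕ) :
    chn f α β x (n+1) = (chn f α β x n).bind (pf f (stc α β n)) := rfl

lemma chn_backstep {x : V} {n : ℕ} {w : V} (h : chn f α β x (n+1) = some w) :
    ∃ t, chn f α β x n = some t ∧ f t w = some (stc α β n) := by
  rw [chn_succ] at h
  obtain ⟨t, ht, hp⟩ := Option.bind_eq_some_iff.1 h
  exact ⟨t, ht, pf_spec hp⟩

lemma chn_none_succ {x : V} {n : ℕ} (h : chn f α β x n = none) :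
    chn f α β x (n+1) = none := by
  rw [chn_succ, h]; rfl

lemma chn_none_mono {x : V} {n m : ℕ} (h : chn f α β x n = none) (hnm : n ≤ m) :
    chn f α β x m = none := by
  induction m with
  | zero => exact (Nat.le_zero.1 hnm) ▸ h
  | succ m IH =>
    rcases Nat.lt_or_ge n (m+1) with hlt | hge
    · exact chn_none_succ (IH (by omega))
    · have he : n = m + 1 := by omega
      exact he ▸ h

lemma stc_add_two (α β : Fin (k+1)) (n : ℕ) : stc α β (n+2) = stc α β n := by
  simp [stc, Nat.even_add_one]

/-- Main chain rigidity: if `x` misses `α`, and `u ≠ w` are two vertices different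
from `x`, each missing `β`, then they cannot both be chain-reachable from `x`. -/
lemma chain_endpoints [Fintype V] {G : SimpleGraph V} (hf : PCol G f)
    (hab : α ≠ β) {x u w : V} (hxu : u ≠ x) (hxw : w ≠ x) (huw : u ≠ w)
    (hxa : fre f x α) (hub : fre f u β) (hwb : fre f w β)
    (hru : Relation.ReflTransGen (Rch α β f) x u)
    (hrw : Relation.ReflTransGen (Rch α β f) x w) : False := by
  have hsymm := hf.1
  have hloop := hf.loopless
  have ch0 : chn f α β x 0 = some x := rfl
  have stc0 : stc α β 0 = β := by simp [stc]
  -- injectivity of the chain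
  have inj : ∀ n m, m < n → ∀ u', chn f α β x n = some u' →
      chn f α β x m = some u' → False := by
    intro n
    induction n using Nat.strong_induction_on with
    | _ n IH =>
      intro m hmn u' hn hm
      obtain ⟨n', rfl⟩ : ∃ n', n = n'+1 := ⟨n-1, by omega⟩
      obtain ⟨t, ht, hft⟩ := chn_backstep hn
      have hftu : f u' t = some (stc α β n') := by rw [hsymm]; exact hft
      match m, hm with
      | 0, hm =>
        have hux : u' = x := Option.some_injective _ (hm.symm.trans ch0)
        rw [hux] at hftu
        rcases stc_mem α β n' with hst | hst
        · exact hxa t (by rw [hst] at hftu; exact hftu)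
        · have hch1 : chn f α β x 1 = some t := by
            rw [chn_succ, ch0, Option.bind_some, stc0]
            exact pf_eq hf (by rw [hst] at hftu; exact hftu)
          rcases Nat.lt_trichotomy n' 1 with h1 | h1 | h1
          · obtain rfl : n' = 0 := by omega
            have htx : t = x := Option.some_injective _ (ht.symm.trans ch0)
            rw [htx, hloop] at hftu
            simp at hftu
          · obtain rfl : n' = 1 := h1
            have h2 : stc α β 1 = α := by simp [stc]
            rw [h2] at hst
            exact hab hst
          · exact IH n' (by omega) 1 h1 t ht hch1
      | m'+1, hm =>
        obtain ⟨s, hs, hfs⟩ := chn_backstep hm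
        have hfus : f u' s = some (stc α β m') := by rw [hsymm]; exact hfs
        by_cases hpar : stc α β m' = stc α β n'
        · have h1 : pf f (stc α β n') u' = some s := pf_eq hf (hpar ▸ hfus)
          have h2 : pf f (stc α β n') u' = some t := pf_eq hf hftu
          obtain rfl : s = t := Option.some_injective _ (h1.symm.trans h2)
          exact IH n' (by omega) m' (by omega) s ht hs
        · have hstep : stc α β n' = stc α β (m'+1) :=
            stc_two_ne hab (stc_mem α β n') (stc_mem α β m') (fun h => hpar h.symm) rfl
          have hch2 : chn f α β x (m'+2) = some t := by
            rw [chn_succ, hm, Option.bind_some, ← hstep]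
            exact pf_eq hf hftu
          rcases Nat.lt_trichotomy (m'+2) n' with h2 | h2 | h2
          · exact IH n' (by omega) (m'+2) h2 t ht hch2
          · exact hpar (h2 ▸ (stc_add_two α β m').symm)
          · obtain rfl : n' = m'+1 := by omega
            obtain rfl : t = u' := Option.some_injective _ (ht.symm.trans hm)
            rw [hloop] at hftu
            simp at hftu
  -- the chain terminates
  have exN : ∃ n, chn f α β x (n+1) = none := by
    by_contra hc
    push_neg at hc
    have hall : ∀ n, ∃ u', chn f α β x n = some u' := by
      intro n
      cases n with
      | zero => exact ⟨x, ch0⟩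
      | succ n => exact Option.ne_none_iff_exists'.1 (hc n)
    choose g hg using hall
    obtain ⟨a, b, hne, hgab⟩ := Finite.exists_ne_map_eq_of_infinite g
    rcases Nat.lt_or_ge a b with h | h
    · exact inj b a h (g a) (hgab ▸ hg b) (hg a)
    · exact inj a b (by omega) (g b) (hgab.symm ▸ hg a) (hg b)
  have hN1 : chn f α β x (Nat.find exN + 1) = none := Nat.find_spec exN
  have hNs : ∀ m, m ≤ Nat.find exN → chn f α β x m ≠ none := by
    intro m hm hnone
    rcases Nat.eq_zero_or_pos m with rfl | hpos
    · rw [ch0] at hnone; simp at hnone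
    · obtain ⟨m', rfl⟩ : ∃ m', m = m'+1 := ⟨m-1, by omega⟩
      exact Nat.find_min exN (by omega) hnone
  -- closure: everything reachable from x is on the chain
  have clos : ∀ u', Relation.ReflTransGen (Rch α β f) x u' →
      ∃ n, chn f α β x n = some u' := by
    intro u' hr
    induction hr with
    | refl => exact ⟨0, ch0⟩
    | @tail b c hR hstep IH =>
      obtain ⟨n, hn⟩ := IH
      have hcol : ∃ γ, f b c = some γ ∧ (γ = α ∨ γ = β) := by
        rcases hstep with h | h
        exacts [⟨α, h, Or.inl rfl⟩, ⟨β, h, Or.inr rfl⟩]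
      obtain ⟨γ, hγ, hγm⟩ := hcol
      by_cases h1 : stc α β n = γ
      · refine ⟨n+1, ?_⟩
        rw [chn_succ, hn, Option.bind_some, h1]
        exact pf_eq hf hγ
      · cases n with
        | zero =>
          have hbx : x = b := Option.some_injective _ (ch0.symm.trans hn)
          rw [← hbx] at hγ
          have hγα : γ = α := by
            rcases hγm with h | h
            · exact h
            · exact absurd (stc0.trans h.symm) h1
          exact absurd (by rw [hγα] at hγ; exact hγ) (hxa c)
        | succ n'' =>
          obtain ⟨s, hs, hfs⟩ := chn_backstep hn
          have h2 : γ = stc α β n'' := by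
            have h3 := stc_two_ne hab hγm (stc_mem α β (n''+1))
              (fun h => h1 h.symm) rfl
            rwa [stc_add_two] at h3
          have h3 : f b s = some γ := by
            rw [← h2] at hfs
            rw [hsymm]
            exact hfs
          exact ⟨n'', (hf.2.2 b s c γ h3 hγ) ▸ hs⟩
  -- endgame: a non-x vertex on the chain missing β must be the last one
  have hend : ∀ u', u' ≠ x → fre f u' β → (∃ n, chn f α β x n = some u') →
      chn f α β x (Nat.find exN) = some u' := by
    rintro u' hux hfreb ⟨n, hn⟩
    have hnN : n ≤ Nat.find exN := by
      by_contra hc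
      have h0 : chn f α β x n = none := chn_none_mono hN1 (by omega)
      rw [h0] at hn
      simp at hn
    rcases Nat.lt_or_ge n (Nat.find exN) with hlt | hge
    · exfalso
      obtain ⟨n'', rfl⟩ : ∃ n'', n = n''+1 := by
        rcases Nat.eq_zero_or_pos n with rfl | hpos
        · exact absurd (Option.some_injective _ (hn.symm.trans ch0)) hux
        · exact ⟨n-1, by omega⟩
      obtain ⟨s, hs, hfs⟩ := chn_backstep hn
      have h4 : chn f α β x (n''+2) ≠ none := hNs _ (by omega)
      rw [chn_succ, hn, Option.bind_some] at h4
      have h5 : ∃ w', f u' w' = some (stc α β (n''+1)) := by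
        by_cases hex : ∃ w', f u' w' = some (stc α β (n''+1))
        · exact hex
        · unfold pf at h4
          rw [dif_neg hex] at h4
          exact absurd rfl h4
      obtain ⟨w', hw'⟩ := h5
      have h6 : f u' s = some (stc α β n'') := by rw [hsymm]; exact hfs
      rcases stc_mem α β (n''+1) with h7 | h7
      · have h8 : stc α β n'' = β := by
          rcases stc_mem α β n'' with h | h
          · exact absurd (h7.trans h.symm) (stc_succ_ne hab n'')
          · exact h
        exact hfreb s (h8 ▸ h6)
      · exact hfreb w' (h7 ▸ hw')
    · obtain rfl : n = Nat.find exN := by omega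
      exact hn
  have h1 := hend u hxu hub (clos u hru)
  have h2 := hend w hxw hwb (clos w hrw)
  exact huw (Option.some_injective _ (h1.symm.trans h2))

end Chain

section Final

variable {G : SimpleGraph V}

/-- new color at `x` for a fan vertex `w` -/
noncomputable def newc (g : V → V → Option (Fin (k+1))) (x : V) (y : ℕ → V) (i : ℕ)
    (a : Fin (k+1)) (w : V) : Option (Fin (k+1)) :=
  if h : ∃ m, m ≤ i ∧ y m = w then
    (if h.choose < i then g x (y (h.choose + 1)) else some a)
  else g x w

/-- rotate the fan `y 0 .. y i` at `x` and give color `a` to edge `x-(y i)` -/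
noncomputable def finalc (g : V → V → Option (Fin (k+1))) (x : V) (y : ℕ → V) (i : ℕ)
    (a : Fin (k+1)) : V → V → Option (Fin (k+1)) :=
  fun u w => if u = x then newc g x y i a w
    else if w = x then newc g x y i a u else g u w

variable {g : V → V → Option (Fin (k+1))} {x : V} {y : ℕ → V} {i : ℕ} {a : Fin (k+1)}

lemma newc_eq (hinj : ∀ m, m ≤ i → ∀ m', m' ≤ i → y m = y m' → m = m')
    {m : ℕ} (hm : m ≤ i) :
    newc g x y i a (y m) = if m < i then g x (y (m + 1)) else some a := by
  unfold newc
  have h : ∃ m', m' ≤ i ∧ y m' = y m := ⟨m, hm, rfl⟩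
  rw [dif_pos h]
  rw [hinj _ h.choose_spec.1 _ hm h.choose_spec.2]

lemma newc_not (h : ¬ ∃ m, m ≤ i ∧ y m = w) : newc g x y i a w = g x w := dif_neg h

lemma final_pcol (hg : PCol G g)
    (hadj : ∀ m, m ≤ i → G.Adj x (y m))
    (hinj : ∀ m, m ≤ i → ∀ m', m' ≤ i → y m = y m' → m = m')
    (h0 : g x (y 0) = none)
    (hsome : ∀ m, 1 ≤ m → m ≤ i → (g x (y m)).isSome)
    (hfree2 : ∀ m, m < i → ∀ b, g x (y (m+1)) = some b → fre g (y m) b)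
    (hax : fre g x a)
    (hai : fre g (y i) a) :
    PCol G (finalc g x y i a) ∧
      ∀ u w, (finalc g x y i a u w).isSome ↔
        ((g u w).isSome ∨ (u = x ∧ w = y 0) ∨ (w = x ∧ u = y 0)) := by
  have hyx : ∀ m, m ≤ i → y m ≠ x := by
    intro m hm h
    exact G.irrefl (h ▸ hadj m hm)
  -- mixed-case helper: u ≠ x is a fan vertex or not, edge to x recolored
  have key : ∀ u w' aa, u ≠ x → w' ≠ x → newc g x y i a u = some aa →
      g u w' = some aa → False := by
    intro u w' aa hux hw'x hnc hgw
    by_cases hfan : ∃ m, m ≤ i ∧ y m = u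
    · obtain ⟨m, hm, rfl⟩ := hfan
      rw [newc_eq hinj hm] at hnc
      by_cases hmi : m < i
      · rw [if_pos hmi] at hnc
        exact hfree2 m hmi aa hnc w' hgw
      · rw [if_neg hmi] at hnc
        obtain rfl : m = i := by omega
        obtain rfl : a = aa := by simpa using hnc
        exact hai w' hgw
    · rw [newc_not hfan] at hnc
      have h2 : g u x = some aa := by rw [hg.1]; exact hnc
      exact hw'x (hg.2.2 u w' x aa hgw h2)
  -- colors at x are "injective"
  have keyx : ∀ w w' aa, newc g x y i a w = some aa → newc g x y i a w' = some aa →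
      w = w' := by
    intro w w' aa h1 h2
    by_cases hf1 : ∃ m, m ≤ i ∧ y m = w
    · obtain ⟨m, hm, rfl⟩ := hf1
      rw [newc_eq hinj hm] at h1
      by_cases hf2 : ∃ m', m' ≤ i ∧ y m' = w'
      · obtain ⟨m', hm', rfl⟩ := hf2
        rw [newc_eq hinj hm'] at h2
        by_cases hmi : m < i <;> by_cases hmi' : m' < i
        · rw [if_pos hmi] at h1
          rw [if_pos hmi'] at h2
          have h3 := hg.2.2 x (y (m+1)) (y (m'+1)) aa h1 h2
          have h4 := hinj _ (by omega) _ (by omega) h3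
          have h5 : m = m' := by omega
          rw [h5]
        · rw [if_pos hmi] at h1
          rw [if_neg hmi'] at h2
          obtain rfl : a = aa := by simpa using h2
          exact absurd h1 (hax (y (m+1)))
        · rw [if_neg hmi] at h1
          rw [if_pos hmi'] at h2
          obtain rfl : a = aa := by simpa using h1
          exact absurd h2 (hax (y (m'+1)))
        · congr 1
          omega
      · rw [newc_not hf2] at h2
        by_cases hmi : m < i
        · rw [if_pos hmi] at h1
          have := hg.2.2 x (y (m+1)) w' aa h1 h2
          exact absurd ⟨m+1, by omega, this⟩ hf2
        · rw [if_neg hmi] at h1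
          obtain rfl : a = aa := by simpa using h1
          exact absurd h2 (hax w')
    · rw [newc_not hf1] at h1
      by_cases hf2 : ∃ m', m' ≤ i ∧ y m' = w'
      · obtain ⟨m', hm', rfl⟩ := hf2
        rw [newc_eq hinj hm'] at h2
        by_cases hmi' : m' < i
        · rw [if_pos hmi'] at h2
          have := hg.2.2 x w (y (m'+1)) aa h1 h2
          exact absurd ⟨m'+1, by omega, this.symm⟩ hf1
        · rw [if_neg hmi'] at h2
          obtain rfl : a = aa := by simpa using h2
          exact absurd h1 (hax w)
      · rw [newc_not hf2] at h2
        exact hg.2.2 x w w' aa h1 h2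
  refine ⟨⟨?_, ?_, ?_⟩, ?_⟩
  · -- symmetry
    intro u w
    unfold finalc
    by_cases hu : u = x <;> by_cases hw : w = x
    · subst hu; subst hw; simp
    · subst hu; simp [hw]
    · subst hw; simp [hu]
    · simp [hu, hw, hg.1 u w]
  · -- support
    intro u w h
    unfold finalc at h
    have hnc : ∀ w', w' ≠ x → (newc g x y i a w').isSome → G.Adj x w' := by
      intro w' hw' hs
      by_cases hf : ∃ m, m ≤ i ∧ y m = w'
      · obtain ⟨m, hm, rfl⟩ := hf
        exact hadj m hm
      · rw [newc_not hf] at hs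
        exact hg.2.1 x w' hs
    by_cases hu : u = x <;> by_cases hw : w = x
    · exfalso
      rw [if_pos hu] at h
      by_cases hf : ∃ m, m ≤ i ∧ y m = w
      · obtain ⟨m, hm, rfl⟩ := hf
        exact hyx m hm hw
      · rw [newc_not hf, hw, hg.loopless] at h
        simp at h
    · rw [if_pos hu] at h
      rw [hu]
      exact hnc w hw h
    · rw [if_neg hu, if_pos hw] at h
      rw [hw]
      exact (hnc u hu h).symm
    · rw [if_neg hu, if_neg hw] at h
      exact hg.2.1 u w h
  · -- properness
    intro u w w' aa h1 h2
    by_cases hu : u = x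
    · rw [finalc] at h1 h2
      rw [if_pos hu] at h1
      rw [if_pos hu] at h2
      exact keyx w w' aa h1 h2
    · by_cases hw : w = x <;> by_cases hw' : w' = x
      · exact hw.trans hw'.symm
      · rw [finalc, if_neg hu, if_pos hw] at h1
        rw [finalc, if_neg hu, if_neg hw'] at h2
        exact (key u w' aa hu hw' h1 h2).elim
      · rw [finalc, if_neg hu, if_neg hw] at h1
        rw [finalc, if_neg hu, if_pos hw'] at h2
        exact (key u w aa hu hw h2 h1).elim
      · rw [finalc, if_neg hu, if_neg hw] at h1
        rw [finalc, if_neg hu, if_neg hw'] at h2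
        exact hg.2.2 u w w' aa h1 h2
  · -- isSome characterization
    intro u w
    have hsome' : ∀ w', w' ≠ x →
        ((newc g x y i a w').isSome ↔ ((g x w').isSome ∨ w' = y 0)) := by
      intro w' hw'
      by_cases hf : ∃ m, m ≤ i ∧ y m = w'
      · obtain ⟨m, hm, rfl⟩ := hf
        rw [newc_eq hinj hm]
        constructor
        · intro _
          rcases Nat.eq_zero_or_pos m with rfl | hpos
          · exact Or.inr rfl
          · exact Or.inl (hsome m (by omega) hm)
        · intro _
          by_cases hmi : m < i
          · rw [if_pos hmi]
            exact hsome (m+1) (by omega) (by omega)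
          · rw [if_neg hmi]
            simp
      · rw [newc_not hf]
        have : ¬ (w' = y 0) := fun h => hf ⟨0, by omega, h.symm⟩
        simp [this]
    by_cases hu : u = x <;> by_cases hw : w = x
    · rw [hu, hw]
      rw [finalc, if_pos rfl]
      have hf : ¬ ∃ m, m ≤ i ∧ y m = x := by
        rintro ⟨m, hm, hy⟩
        exact hyx m hm hy
      rw [newc_not hf, hg.loopless]
      have h1 : ¬ (x = y 0) := fun h => hyx 0 (by omega) h.symm
      simp [h1]
    · rw [hu]
      rw [finalc, if_pos rfl, hsome' w hw]
      have h1 : ¬ (w = x ∧ x = y 0) := fun h => hyx 0 (by omega) h.2.symm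
      simp [h1, hw]
    · rw [hw]
      rw [finalc, if_neg hu, if_pos rfl, hsome' u hu]
      have h1 : ¬ (u = x ∧ x = y 0) := fun h => hyx 0 (by omega) h.2.symm
      rw [hg.1 u x]
      simp [h1, hu]
    · rw [finalc, if_neg hu, if_neg hw]
      simp [hu, hw]

end Final

section Fan

variable [Fintype V] {G : SimpleGraph V} {f : V → V → Option (Fin (k+1))}

lemma fan_exists (hf : PCol G f) (φ : V → Fin (k+1)) (hφ : ∀ u, fre f u (φ u))
    (x z₀ : V) (hadj : G.Adj x z₀) (hnone : f x z₀ = none) :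
    ∃ (l : ℕ) (y : ℕ → V), y 0 = z₀ ∧ (∀ m, m ≤ l → G.Adj x (y m)) ∧
      (∀ m, m ≤ l → ∀ m', m' ≤ l → y m = y m' → m = m') ∧
      (∀ m, m < l → f x (y (m+1)) = some (φ (y m))) ∧
      (fre f x (φ (y l)) ∨ ∃ j, j ≤ l ∧ f x (y j) = some (φ (y l))) := by
  have main : ∀ n l (y : ℕ → V), y 0 = z₀ → (∀ m, m ≤ l → G.Adj x (y m)) →
      (∀ m, m ≤ l → ∀ m', m' ≤ l → y m = y m' → m = m') →
      (∀ m, m < l → f x (y (m+1)) = some (φ (y m))) →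
      Fintype.card V ≤ l + n →
      ∃ (l' : ℕ) (y' : ℕ → V), y' 0 = z₀ ∧ (∀ m, m ≤ l' → G.Adj x (y' m)) ∧
        (∀ m, m ≤ l' → ∀ m', m' ≤ l' → y' m = y' m' → m = m') ∧
        (∀ m, m < l' → f x (y' (m+1)) = some (φ (y' m))) ∧
        (fre f x (φ (y' l')) ∨ ∃ j, j ≤ l' ∧ f x (y' j) = some (φ (y' l'))) := by
    intro n
    induction n with
    | zero =>
      intro l y h1 h2 h3 h4 h5
      exfalso
      have hinj : Function.Injective (fun m : Fin (l+1) => y m.1) := by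
        intro m m' hmm
        exact Fin.ext (h3 m.1 (by omega) m'.1 (by omega) hmm)
      have := Fintype.card_le_of_injective _ hinj
      simp only [Fintype.card_fin] at this
      omega
    | succ n IH =>
      intro l y h1 h2 h3 h4 h5
      by_cases hc1 : fre f x (φ (y l))
      · exact ⟨l, y, h1, h2, h3, h4, Or.inl hc1⟩
      · have hz : ∃ z, f x z = some (φ (y l)) := by
          unfold fre at hc1
          push_neg at hc1
          simpa using hc1
        obtain ⟨z, hz⟩ := hz
        by_cases hc2 : ∃ j, j ≤ l ∧ y j = z
        · refine ⟨l, y, h1, h2, h3, h4, Or.inr ?_⟩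
          obtain ⟨j, hj, rfl⟩ := hc2
          exact ⟨j, hj, hz⟩
        · refine IH (l+1) (fun m => if m ≤ l then y m else z) (by simp [h1]) ?_ ?_ ?_ (by omega)
          · intro m hm
            by_cases hml : m ≤ l
            · simpa [hml] using h2 m hml
            · simp only [hml, if_neg]
              simpa using hf.2.1 x z (by simp [hz])
          · intro m hm m' hm' hmm
            by_cases hml : m ≤ l <;> by_cases hml' : m' ≤ l
            · simp only [hml, hml', if_pos] at hmm
              exact h3 m hml m' hml' hmm
            · simp only [hml, hml', if_pos, if_neg] at hmm
              exact absurd ⟨m, hml, hmm⟩ hc2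
            · simp only [hml, hml', if_pos, if_neg] at hmm
              exact absurd ⟨m', hml', hmm.symm⟩ hc2
            · omega
          · intro m hm
            by_cases hml : m < l
            · have e1 : m + 1 ≤ l := by omega
              have e2 : m ≤ l := by omega
              simp only [e1, e2, if_pos]
              exact h4 m hml
            · have e0 : m = l := by omega
              have e1 : ¬ (m + 1 ≤ l) := by omega
              have e2 : m ≤ l := by omega
              simp only [e1, e2, if_pos, if_neg]
              rw [e0]
              exact hz
  refine main (Fintype.card V) 0 (fun _ => z₀) rfl ?_ ?_ ?_ (by omega)
  · intro m hm
    exact hadj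
  · intro m hm m' hm' _
    omega
  · intro m hm
    omega

end Fan

section Extend

variable [Fintype V] {G : SimpleGraph V} [DecidableRel G.Adj]
  {f : V → V → Option (Fin (k+1))}

lemma extend_one (hdeg : ∀ u, G.degree u ≤ k) (hf : PCol G f)
    (x z₀ : V) (hadj : G.Adj x z₀) (hnone : f x z₀ = none) :
    ∃ f' : V → V → Option (Fin (k+1)), PCol G f' ∧ ∀ u w, (f' u w).isSome ↔
      ((f u w).isSome ∨ (u = x ∧ w = z₀) ∨ (w = x ∧ u = z₀)) := by
  have hfree : ∀ u, ∃ a, fre f u a := exists_fre hdeg hf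
  choose φ hφ using hfree
  obtain ⟨l, y, hy0, hadjf, hinjf, hcolf, hcase⟩ := fan_exists hf φ hφ x z₀ hadj hnone
  have hsomef : ∀ m, 1 ≤ m → m ≤ l → (f x (y m)).isSome := by
    intro m h1 h2
    obtain ⟨m', rfl⟩ : ∃ m', m = m'+1 := ⟨m-1, by omega⟩
    rw [hcolf m' (by omega)]
    rfl
  rcases hcase with hfr | ⟨j, hjl, hjcol⟩
  · -- Case 1 : the free color of the last fan vertex is free at x
    have hfr2 : ∀ m, m < l → ∀ b, f x (y (m+1)) = some b → fre f (y m) b := by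
      intro m hm b hb
      rw [hcolf m hm] at hb
      obtain rfl : φ (y m) = b := by simpa using hb
      exact hφ (y m)
    obtain ⟨hp, hiff⟩ := final_pcol (a := φ (y l)) hf hadjf hinjf (by rw [hy0]; exact hnone)
      hsomef hfr2 hfr (hφ (y l))
    exact ⟨_, hp, fun u w => by rw [hiff, hy0]⟩
  · -- Case 2 : it is used at x, on fan edge x - y j
    have hj1 : 1 ≤ j := by
      rcases Nat.eq_zero_or_pos j with rfl | h
      · rw [hy0, hnone] at hjcol
        simp at hjcol
      · exact h
    set α := φ x with hα
    set β := φ (y l) with hβ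
    have hab : α ≠ β := fun h => hφ x (y j) (by rw [← hα, h]; exact hjcol)
    have hbj : φ (y (j-1)) = β := by
      have h1 := hcolf (j-1) (by omega)
      rw [show j-1+1 = j by omega] at h1
      exact Option.some_injective _ (h1.symm.trans hjcol)
    have hxyl : y l ≠ x := fun h => G.irrefl (h ▸ hadjf l le_rfl)
    have hxyj1 : y (j-1) ≠ x := fun h => G.irrefl (h ▸ hadjf (j-1) (by omega))
    have hylj1 : y l ≠ y (j-1) := fun h =>
      absurd (hinjf l le_rfl (j-1) (by omega) h) (by omega)
    have hfylb : fre f (y l) β := hφ (y l)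
    have hfyj1b : fre f (y (j-1)) β := by rw [← hbj]; exact hφ (y (j-1))
    -- colors of interior fan edges are neither α nor β
    have hphi_ne : ∀ m, m < l → m ≠ j-1 → φ (y m) ≠ α ∧ φ (y m) ≠ β := by
      intro m hm hmj
      constructor
      · intro h
        exact hφ x (y (m+1)) (by rw [← hα, ← h]; exact hcolf m hm)
      · intro h
        have h1 : f x (y (m+1)) = some β := by rw [← h]; exact hcolf m hm
        have h2 := hf.2.2 x (y (m+1)) (y j) β h1 hjcol
        have := hinjf (m+1) (by omega) j (by omega) h2
        omega
    by_cases hreach : Relation.ReflTransGen (Rch α β f) x (y l)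
    · -- Case B : x and y l are in the same α/β chain; swap at y (j-1) instead
      have hnr : ¬ Relation.ReflTransGen (Rch α β f) x (y (j-1)) := fun h =>
        chain_endpoints hf hab hxyl hxyj1 hylj1 (hφ x) hfylb hfyj1b hreach h
      have hnrb : ¬ Relation.ReflTransGen (Rch α β f) (y (j-1)) x := fun h => by
        haveI : Std.Symm (Rch α β f) := ⟨fun _ _ h => Rch_symm hf.1 h⟩
        exact hnr (Std.Symm.symm (r := Relation.ReflTransGen (Rch α β f)) _ _ h)
      have hg : PCol G (swapc α β f (y (j-1))) := swapc_pcol hf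
      have hgx : ∀ w, swapc α β f (y (j-1)) x w = f x w := fun w => by
        rw [swapc_eq, if_neg hnrb]
      have hh1 : ∀ m, m < j-1 → ∀ b, swapc α β f (y (j-1)) x (y (m+1)) = some b →
          fre (swapc α β f (y (j-1))) (y m) b := by
        intro m hm b hb
        rw [hgx, hcolf m (by omega)] at hb
        obtain rfl : φ (y m) = b := by simpa using hb
        have hne := hphi_ne m (by omega) (by omega)
        rw [fre_swapc_other hne.1 hne.2]
        exact hφ (y m)
      have hh2 : fre (swapc α β f (y (j-1))) x α := by
        intro w
        rw [hgx]
        exact hφ x w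
      have hh3 : fre (swapc α β f (y (j-1))) (y (j-1)) α := by
        rw [fre_swapc_of Relation.ReflTransGen.refl]
        have ht : tauc α β α = β := by simp [tauc]
        rw [ht]
        exact hfyj1b
      obtain ⟨hp, hiff⟩ := final_pcol (y := y) (i := j-1) (a := α) hg
        (fun m hm => hadjf m (by omega)) (fun m hm m' hm' => hinjf m (by omega) m' (by omega))
        (by rw [hgx, hy0]; exact hnone)
        (fun m h1 h2 => by rw [hgx]; exact hsomef m h1 (by omega)) hh1 hh2 hh3
      exact ⟨_, hp, fun u w => by rw [hiff, hy0, swapc_isSome]⟩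
    · -- Case A : swap at y l
      have hnrb : ¬ Relation.ReflTransGen (Rch α β f) (y l) x := fun h => by
        haveI : Std.Symm (Rch α β f) := ⟨fun _ _ h => Rch_symm hf.1 h⟩
        exact hreach (Std.Symm.symm (r := Relation.ReflTransGen (Rch α β f)) _ _ h)
      have hg : PCol G (swapc α β f (y l)) := swapc_pcol hf
      have hgx : ∀ w, swapc α β f (y l) x w = f x w := fun w => by
        rw [swapc_eq, if_neg hnrb]
      have hgyl : fre (swapc α β f (y l)) (y l) α := by
        rw [fre_swapc_of Relation.ReflTransGen.refl]
        have ht : tauc α β α = β := by simp [tauc]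
        rw [ht]
        exact hfylb
      by_cases hb2 : fre (swapc α β f (y l)) (y (j-1)) β
      · -- A1 : rotate the whole fan, color x-(y l) with α
        have hh1 : ∀ m, m < l → ∀ b, swapc α β f (y l) x (y (m+1)) = some b →
            fre (swapc α β f (y l)) (y m) b := by
          intro m hm b hb
          rw [hgx, hcolf m hm] at hb
          obtain rfl : φ (y m) = b := by simpa using hb
          by_cases hmj : m = j-1
          · rw [hmj, hbj]
            exact hb2
          · have hne := hphi_ne m hm hmj
            rw [fre_swapc_other hne.1 hne.2]
            exact hφ (y m)
        have hh2 : fre (swapc α β f (y l)) x α := by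
          intro w
          rw [hgx]
          exact hφ x w
        obtain ⟨hp, hiff⟩ := final_pcol (y := y) (i := l) (a := α) hg hadjf hinjf
          (by rw [hgx, hy0]; exact hnone)
          (fun m h1 h2 => by rw [hgx]; exact hsomef m h1 h2) hh1 hh2 hgyl
        exact ⟨_, hp, fun u w => by rw [hiff, hy0, swapc_isSome]⟩
      · -- A2 : rotate the fan up to j-1, color x-(y (j-1)) with α
        have hrj : Relation.ReflTransGen (Rch α β f) (y l) (y (j-1)) := by
          by_contra h
          rw [fre_swapc_of_not h] at hb2
          exact hb2 hfyj1b
        have hgj1 : fre (swapc α β f (y l)) (y (j-1)) α := by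
          rw [fre_swapc_of hrj]
          have ht : tauc α β α = β := by simp [tauc]
          rw [ht]
          exact hfyj1b
        have hh1 : ∀ m, m < j-1 → ∀ b, swapc α β f (y l) x (y (m+1)) = some b →
            fre (swapc α β f (y l)) (y m) b := by
          intro m hm b hb
          rw [hgx, hcolf m (by omega)] at hb
          obtain rfl : φ (y m) = b := by simpa using hb
          have hne := hphi_ne m (by omega) (by omega)
          rw [fre_swapc_other hne.1 hne.2]
          exact hφ (y m)
        have hh2 : fre (swapc α β f (y l)) x α := by
          intro w
          rw [hgx]
          exact hφ x w
        obtain ⟨hp, hiff⟩ := final_pcol (y := y) (i := j-1) (a := α) hg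
          (fun m hm => hadjf m (by omega)) (fun m hm m' hm' => hinjf m (by omega) m' (by omega))
          (by rw [hgx, hy0]; exact hnone)
          (fun m h1 h2 => by rw [hgx]; exact hsomef m h1 (by omega)) hh1 hh2 hgj1
        exact ⟨_, hp, fun u w => by rw [hiff, hy0, swapc_isSome]⟩

end Extend

section Complete

variable [Fintype V] {G : SimpleGraph V} [DecidableRel G.Adj]

lemma complete_col (hdeg : ∀ u, G.degree u ≤ k) :
    ∀ (n : ℕ) (f : V → V → Option (Fin (k+1))), PCol G f →
      (Finset.univ.filter (fun p : V × V => G.Adj p.1 p.2 ∧ f p.1 p.2 = none)).card ≤ n →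
      ∃ f' : V → V → Option (Fin (k+1)), PCol G f' ∧
        ∀ u w, G.Adj u w → (f' u w).isSome := by
  intro n
  induction n with
  | zero =>
    intro f hf hcard
    refine ⟨f, hf, fun u w hadj => ?_⟩
    rw [Option.isSome_iff_ne_none]
    intro hnone
    have h1 : (u, w) ∈ Finset.univ.filter
        (fun p : V × V => G.Adj p.1 p.2 ∧ f p.1 p.2 = none) := by
      simp [hadj, hnone]
    rw [Finset.card_eq_zero.1 (Nat.le_zero.1 hcard)] at h1
    simp at h1
  | succ n IH =>
    intro f hf hcard
    by_cases hne : ∃ p : V × V, G.Adj p.1 p.2 ∧ f p.1 p.2 = none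
    · obtain ⟨⟨x, z⟩, hadj, hnone⟩ := hne
      obtain ⟨f', hf', hiff⟩ := extend_one hdeg hf x z hadj hnone
      apply IH f' hf'
      have hmem : (x, z) ∈ Finset.univ.filter
          (fun p : V × V => G.Adj p.1 p.2 ∧ f p.1 p.2 = none) := by
        simp [hadj, hnone]
      have hsub : Finset.univ.filter
          (fun p : V × V => G.Adj p.1 p.2 ∧ f' p.1 p.2 = none) ⊆
          (Finset.univ.filter
            (fun p : V × V => G.Adj p.1 p.2 ∧ f p.1 p.2 = none)).erase (x, z) := by
        intro p hp
        simp only [Finset.mem_filter, Finset.mem_univ, true_and] at hp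
        have h2 : ¬ (f' p.1 p.2).isSome := by rw [hp.2]; simp
        rw [hiff] at h2
        push_neg at h2
        obtain ⟨h3, h4, h5⟩ := h2
        rw [Finset.mem_erase]
        constructor
        · intro hpe
          rw [hpe] at h4
          exact (h4 rfl) rfl
        · simp only [Finset.mem_filter, Finset.mem_univ, true_and]
          exact ⟨hp.1, Option.not_isSome_iff_eq_none.1 h3⟩
      calc (Finset.univ.filter
          (fun p : V × V => G.Adj p.1 p.2 ∧ f' p.1 p.2 = none)).card
          ≤ ((Finset.univ.filter
            (fun p : V × V => G.Adj p.1 p.2 ∧ f p.1 p.2 = none)).erase (x, z)).card :=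
            Finset.card_le_card hsub
        _ = (Finset.univ.filter
            (fun p : V × V => G.Adj p.1 p.2 ∧ f p.1 p.2 = none)).card - 1 :=
            Finset.card_erase_of_mem hmem
        _ ≤ n := by omega
    · push_neg at hne
      refine ⟨f, hf, fun u w hadj => ?_⟩
      rw [Option.isSome_iff_ne_none]
      exact hne (u, w) hadj

end Complete

end Vizing

/-- If `G` has max degree at most `k` and `G` minus a vertex `v` has a proper
edge coloring with `k + 1` colors, then so does `G`. -/
theorem vizing_extend_coloring {V : Type*} [Fintype V] (G : SimpleGraph V)
    [DecidableRel G.Adj] {k : ℕ} (v : V)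
    (hdeg : ∀ u, G.degree u ≤ k)
    (hcol : ∃ c : (G.induce {v}ᶜ).edgeSet → Fin (k + 1),
      IsProperEdgeColoring (G.induce {v}ᶜ) c) :
    ∃ c : G.edgeSet → Fin (k + 1), IsProperEdgeColoring G c := by
  classical
  obtain ⟨c₀, hc₀⟩ := hcol
  have hmem : ∀ {u : V}, u ≠ v → u ∈ ({v}ᶜ : Set V) := fun h => by simp [h]
  -- initial partial coloring : color all edges avoiding v
  set f₀ : V → V → Option (Fin (k+1)) := fun u w =>
    if h : G.Adj u w ∧ u ≠ v ∧ w ≠ v then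
      some (c₀ ⟨s(⟨u, hmem h.2.1⟩, ⟨w, hmem h.2.2⟩), by
        rw [SimpleGraph.mem_edgeSet]
        simpa using h.1⟩)
    else none with hf₀
  have hf₀pcol : PCol G f₀ := by
    refine ⟨?_, ?_, ?_⟩
    · intro u w
      simp only [hf₀]
      by_cases h : G.Adj u w ∧ u ≠ v ∧ w ≠ v
      · have h' : G.Adj w u ∧ w ≠ v ∧ u ≠ v := ⟨h.1.symm, h.2.2, h.2.1⟩
        simp only [dif_pos h, dif_pos h']
        exact congrArg (fun e => some (c₀ e)) (Subtype.ext Sym2.eq_swap)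
      · have h' : ¬ (G.Adj w u ∧ w ≠ v ∧ u ≠ v) := fun hc =>
          h ⟨hc.1.symm, hc.2.2, hc.2.1⟩
        simp only [dif_neg h, dif_neg h']
    · intro u w hs
      simp only [hf₀] at hs
      by_cases h : G.Adj u w ∧ u ≠ v ∧ w ≠ v
      · exact h.1
      · rw [dif_neg h] at hs
        simp at hs
    · intro u w w' a h1 h2
      by_cases hww : w = w'
      · exact hww
      exfalso
      simp only [hf₀] at h1 h2
      by_cases h : G.Adj u w ∧ u ≠ v ∧ w ≠ v
      · by_cases h' : G.Adj u w' ∧ u ≠ v ∧ w' ≠ v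
        · rw [dif_pos h] at h1
          rw [dif_pos h'] at h2
          have he1 := Option.some_injective _ h1
          have he2 := Option.some_injective _ h2
          have hne : (⟨s(⟨u, hmem h.2.1⟩, ⟨w, hmem h.2.2⟩), by
                rw [SimpleGraph.mem_edgeSet]; simpa using h.1⟩ :
                (G.induce {v}ᶜ).edgeSet) ≠
              ⟨s(⟨u, hmem h'.2.1⟩, ⟨w', hmem h'.2.2⟩), by
                rw [SimpleGraph.mem_edgeSet]; simpa using h'.1⟩ := by
            intro hc
            rw [Subtype.mk.injEq, Sym2.eq_iff] at hc
            rcases hc with ⟨-, hc⟩ | ⟨hc1, hc2⟩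
            · exact hww (congrArg Subtype.val hc)
            · have hw : w = u := congrArg Subtype.val hc2
              have hw' : u = w' := congrArg Subtype.val hc1
              exact G.irrefl (hw ▸ h.1)
          exact hc₀ _ _ hne ⟨⟨u, hmem h.2.1⟩, Sym2.mem_mk_left _ _,
            Sym2.mem_mk_left _ _⟩ (he1.trans he2.symm)
        · rw [dif_neg h'] at h2
          simp at h2
      · rw [dif_neg h] at h1
        simp at h1
  obtain ⟨f', hf', htot⟩ := complete_col hdeg _ f₀ hf₀pcol le_rfl
  -- build the coloring on the edge set
  refine ⟨fun e => Sym2.lift ⟨fun a b => (f' a b).getD 0,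
    fun a b => by show (f' a b).getD 0 = (f' b a).getD 0; rw [hf'.1 a b]⟩ e.1, ?_⟩
  rintro ⟨e₁, h₁⟩ ⟨e₂, h₂⟩ hne ⟨t, ht₁, ht₂⟩
  simp only at ht₁ ht₂
  obtain ⟨b, rfl⟩ := Sym2.mem_iff_exists.1 ht₁
  obtain ⟨b', rfl⟩ := Sym2.mem_iff_exists.1 ht₂
  have hadj1 : G.Adj t b := (SimpleGraph.mem_edgeSet G).1 h₁
  have hadj2 : G.Adj t b' := (SimpleGraph.mem_edgeSet G).1 h₂
  have hbb : b ≠ b' := by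
    intro hc
    subst hc
    exact hne rfl
  simp only [Subtype.coe_mk, Sym2.lift_mk]
  intro heq
  obtain ⟨p, hp⟩ := Option.isSome_iff_exists.1 (htot t b hadj1)
  obtain ⟨q, hq⟩ := Option.isSome_iff_exists.1 (htot t b' hadj2)
  rw [hp, hq] at heq
  simp only [Option.getD_some] at heq
  rw [heq] at hp
  exact hbb (hf'.2.2 t b b' q hp hq)
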